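/- For groups G, F_1, F_2 with F_1 and F_2 finite, there is an injective group homomorphism (G ≀ F_1) ≀ F_2 → G ≀ (F_1 ≀ F_2). -/

import Mathlib

/-- The automorphism of `F → G` given by precomposition with left translation by `f⁻¹`. -/
def wreathPermAut (G F : Type*) [Group G] [Group F] (f : F) : MulAut (F → G) where
  toFun v := fun x => v (f⁻¹ * x)
  invFun v := fun x => v (f * x)
  left_inv v := by funext x; simp
  right_inv v := by funext x; simp
  map_mul' v w := rfl

/-- The action of `F` on `∏_F G` permuting the factors by left translation. -/
def wreathAct (G F : Type*) [Group G] [Group F] : F →* MulAut (F → G) where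
  toFun := wreathPermAut G F
  map_one' := by
    apply MulEquiv.ext; intro v; funext x; simp [wreathPermAut]
  map_mul' f g := by
    apply MulEquiv.ext; intro v; funext x
    simp [wreathPermAut, MulAut.mul_def, mul_assoc]

/-- The wreath product `G ≀ F = (∏_F G) ⋊ F`. -/
abbrev Wreath (G F : Type*) [Group G] [Group F] :=
  (F → G) ⋊[wreathAct G F] F

/-- For finite `F₁`, `F₂` there is an injective group homomorphism
`(G ≀ F₁) ≀ F₂ → G ≀ (F₁ ≀ F₂)`. -/
theorem wreath_wreath_embeds (G F₁ F₂ : Type*) [Group G] [Group F₁] [Group F₂]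
    [Finite F₁] [Finite F₂] :
    ∃ f : Wreath (Wreath G F₁) F₂ →* Wreath G (Wreath F₁ F₂), Function.Injective f := by
  refine ⟨MonoidHom.mk' (fun x =>
    ⟨fun p => (x.left p.right).left (p.left p.right),
      ⟨fun b => (x.left b).right, x.right⟩⟩) ?_, ?_⟩
  · intro a b
    ext p
    · simp only [SemidirectProduct.mul_left, SemidirectProduct.mul_right]
      simp [SemidirectProduct.mul_left, SemidirectProduct.mul_right, wreathAct, wreathPermAut,
          mul_assoc, -SemidirectProduct.mk_eq_inl_mul_inr]
      erw [SemidirectProduct.inv_left, SemidirectProduct.inv_right]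
      simp [wreathAct, wreathPermAut]
    · simp only [SemidirectProduct.mul_left, SemidirectProduct.mul_right]
      simp [SemidirectProduct.mul_left, SemidirectProduct.mul_right, wreathAct, wreathPermAut]
    · simp only [SemidirectProduct.mul_left, SemidirectProduct.mul_right]
  · rw [injective_iff_map_eq_one]
    intro x hx
    have hr : x.right = 1 := congrArg SemidirectProduct.right (congrArg SemidirectProduct.right hx)
    have hs : ∀ b, (x.left b).right = 1 := fun b =>
      congrFun (congrArg SemidirectProduct.left (congrArg SemidirectProduct.right hx)) b
    have hg : ∀ b y, (x.left b).left y = 1 := fun b y =>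
      congrFun (congrArg SemidirectProduct.left hx) ⟨fun _ => y, b⟩
    ext b
    · exact hg _ _
    · exact hs _
    · exact hr
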